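/- Independence implies zero F-information: let F be a predictive family satisfying optional ignorance and let X, Y be independent random variables. Then I_F(X → Y) = H_F(Y) − H_F(Y|X) = 0. -/
import Mathlib


/-- Independence implies zero F-information. `X, Y` are independent
(finite) random variables with pmfs `pX, pY` (so the joint pmf is the product), and
`F` is a predictive family satisfying optional ignorance. Then
`I_F(X → Y) = H_F(Y) - H_F(Y|X) = 0`. -/
theorem information_eq_zero_of_indep
    {𝓧 𝓨 : Type*} [Fintype 𝓧] [Fintype 𝓨]
    (pX : 𝓧 → ℝ) (pY : 𝓨 → ℝ)
    (hpX : ∀ x, 0 ≤ pX x) (hpXsum : ∑ x, pX x = 1)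
    (hpY : ∀ y, 0 ≤ pY y) (hpYsum : ∑ y, pY y = 1)
    (F : Set (Option 𝓧 → 𝓨 → ℝ)) (hF : F.Nonempty)
    (hOI : ∀ f ∈ F, ∀ o : Option 𝓧, ∃ f' ∈ F,
      (∀ x : 𝓧, f' (some x) = f o) ∧ f' none = f o) :
    sInf ((fun f => ∑ y, pY y * (-Real.log (f none y))) '' F)
      - sInf ((fun f => ∑ x, ∑ y, pX x * pY y * (-Real.log (f (some x) y))) '' F)
      = 0 := by
  set A := ((fun f => ∑ y, pY y * (-Real.log (f none y))) '' F) with hA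
  set B := ((fun f => ∑ x, ∑ y, pX x * pY y * (-Real.log (f (some x) y))) '' F) with hB
  have hAB : A ⊆ B := by
    rintro a ⟨f, hf, rfl⟩
    obtain ⟨f', hf', hfx, hfn⟩ := hOI f hf none
    refine ⟨f', hf', ?_⟩
    simp only [hfx]
    have h1 : ∀ x : 𝓧, ∑ y, pX x * pY y * (-Real.log (f none y))
        = pX x * ∑ y, pY y * (-Real.log (f none y)) := by
      intro x; rw [Finset.mul_sum]; exact Finset.sum_congr rfl fun y _ => by ring
    simp only [h1]
    rw [← Finset.sum_mul, hpXsum, one_mul]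
  have hBge : ∀ b ∈ B, BddBelow A → sInf A ≤ b := by
    rintro b ⟨f, hf, rfl⟩ hbdd
    have hmem : ∀ x : 𝓧, (∑ y, pY y * (-Real.log (f (some x) y))) ∈ A := by
      intro x
      obtain ⟨f', hf', _, hfn⟩ := hOI f hf (some x)
      exact ⟨f', hf', by simp [hfn]⟩
    calc sInf A = ∑ x, pX x * sInf A := by rw [← Finset.sum_mul, hpXsum, one_mul]
      _ ≤ ∑ x, pX x * (∑ y, pY y * (-Real.log (f (some x) y))) := by
          refine Finset.sum_le_sum fun x _ => ?_
          exact mul_le_mul_of_nonneg_left (csInf_le hbdd (hmem x)) (hpX x)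
      _ = ∑ x, ∑ y, pX x * pY y * (-Real.log (f (some x) y)) := by
          refine Finset.sum_congr rfl fun x _ => ?_
          rw [Finset.mul_sum]; exact Finset.sum_congr rfl fun y _ => by ring
  have hAne : A.Nonempty := hF.image _
  have hBne : B.Nonempty := hF.image _
  by_cases hbdd : BddBelow A
  · have hBbdd : BddBelow B := ⟨sInf A, fun b hb => hBge b hb hbdd⟩
    have h1 : sInf B ≤ sInf A := csInf_le_csInf hBbdd hAne hAB
    have h2 : sInf A ≤ sInf B := le_csInf hBne fun b hb => hBge b hb hbdd
    linarith
  · have hBbdd : ¬ BddBelow B := fun h => hbdd (h.mono hAB)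
    rw [Real.sInf_of_not_bddBelow hbdd, Real.sInf_of_not_bddBelow hBbdd, sub_zero]
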